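/- arXiv:2509.20763 — 4 statements merged into one kernel-verified Lean document; each statement's English description precedes it below -/
import Mathlib

section
/- If G is a finite bipartite simple graph on n vertices in which every vertex has odd degree, then χso(G) = 2 and 2·αod(G) ≥ n. -/
open Finset

section OddIndepDefs

variable {V : Type*} [Fintype V] [DecidableEq V]

/-- `S` is an odd independent set in `G`: `S` is independent and every vertex outside `S`
has either no neighbor in `S` or an odd number of neighbors in `S`. -/
def IsOddIndepSet (G : SimpleGraph V) [DecidableRel G.Adj] (S : Finset V) : Prop :=
  (∀ u ∈ S, ∀ v ∈ S, ¬ G.Adj u v) ∧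
  ∀ v ∉ S, (S.filter fun u => G.Adj v u) = ∅ ∨ Odd (S.filter fun u => G.Adj v u).card

/-- The odd independence number: the largest size of an odd independent set. -/
noncomputable def oddIndepNum (G : SimpleGraph V) [DecidableRel G.Adj] : ℕ :=
  sSup {k | ∃ S : Finset V, IsOddIndepSet G S ∧ S.card = k}

/-- The independence number: the largest size of an independent set. -/
noncomputable def indepNum (G : SimpleGraph V) : ℕ :=
  sSup {k | ∃ S : Finset V, (∀ u ∈ S, ∀ v ∈ S, ¬ G.Adj u v) ∧ S.card = k}

/-- A strong odd coloring with `n` colors: a proper coloring such that for every vertex `v`,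
every color appearing in the open neighborhood of `v` appears there an odd number of times. -/
def IsStrongOddColoring (G : SimpleGraph V) [DecidableRel G.Adj] {n : ℕ} (c : V → Fin n) : Prop :=
  (∀ u v, G.Adj u v → c u ≠ c v) ∧
  ∀ v : V, ∀ k : Fin n,
    (univ.filter fun u => G.Adj v u ∧ c u = k) = ∅ ∨
    Odd (univ.filter fun u => G.Adj v u ∧ c u = k).card

/-- The strong odd chromatic number: minimum number of colors of a strong odd coloring. -/
noncomputable def strongOddChromNum (G : SimpleGraph V) [DecidableRel G.Adj] : ℕ :=
  sInf {n | ∃ c : V → Fin n, IsStrongOddColoring G c}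

/-- The chromatic number, as a natural number. -/
noncomputable def chromNum (G : SimpleGraph V) : ℕ :=
  sInf {n | ∃ c : V → Fin n, ∀ u v, G.Adj u v → c u ≠ c v}

/-- The square of a graph: two distinct vertices are adjacent iff they are at distance at most 2,
i.e. adjacent or having a common neighbor. -/
def graphSquare (G : SimpleGraph V) : SimpleGraph V where
  Adj u v := u ≠ v ∧ (G.Adj u v ∨ ∃ w, G.Adj u w ∧ G.Adj w v)
  symm := ⟨by
    intro u v h
    refine ⟨h.1.symm, ?_⟩
    rcases h.2 with h' | ⟨w, h1, h2⟩
    · exact Or.inl h'.symm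
    · exact Or.inr ⟨w, h2.symm, h1.symm⟩⟩
  loopless := ⟨fun v h => h.1 rfl⟩

instance (G : SimpleGraph V) [DecidableRel G.Adj] : DecidableRel (graphSquare G).Adj :=
  fun u v => inferInstanceAs (Decidable (u ≠ v ∧ (G.Adj u v ∨ ∃ w, G.Adj u w ∧ G.Adj w v)))

end OddIndepDefs


private lemma fin2_aux : ∀ a b x : Fin 2, a ≠ b → x ≠ a → x = b := by decide

/-- If `G` is a finite bipartite simple graph on `n` vertices in which every
vertex has odd degree, then `χso(G) = 2` and `2·αod(G) ≥ n`. (Bipartite = 2-colorable.) -/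
theorem strongOddChromNum_eq_two_of_bipartite_odd_degrees
    {V : Type*} [Fintype V] [DecidableEq V] [Nonempty V]
    (G : SimpleGraph V) [DecidableRel G.Adj]
    (hbip : G.Colorable 2) (hdeg : ∀ v : V, Odd (G.degree v)) :
    strongOddChromNum G = 2 ∧ Fintype.card V ≤ 2 * oddIndepNum G := by
  classical
  obtain ⟨c⟩ := hbip
  -- existence of an edge at every vertex
  have hedge : ∀ v : V, ∃ u, G.Adj v u := by
    intro v
    have h1 : 0 < G.degree v := (hdeg v).pos
    rw [← SimpleGraph.card_neighborFinset_eq_degree] at h1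
    obtain ⟨u, hu⟩ := Finset.card_pos.mp h1
    exact ⟨u, (SimpleGraph.mem_neighborFinset G v u).mp hu⟩
  -- c as strong odd coloring
  have hsoc : IsStrongOddColoring G (c : V → Fin 2) := by
    constructor
    · intro u v huv; exact c.valid huv
    · intro v k
      by_cases hk : k = c v
      · left
        apply Finset.filter_eq_empty_iff.mpr
        intro u _
        rintro ⟨hadj, hcu⟩
        exact c.valid hadj.symm (hcu.trans hk)
      · right
        have : (Finset.univ.filter fun u => G.Adj v u ∧ (c : V → Fin 2) u = k)
            = G.neighborFinset v := by
          ext u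
          simp only [Finset.mem_filter, Finset.mem_univ, true_and,
            SimpleGraph.mem_neighborFinset]
          constructor
          · rintro ⟨h, _⟩; exact h
          · intro h
            refine ⟨h, fin2_aux (c v) k (c u) (Ne.symm hk) ?_⟩
            exact fun hc => c.valid h hc.symm
        rw [this, SimpleGraph.card_neighborFinset_eq_degree]
        exact hdeg v
  -- color classes are odd independent sets
  have hclass : ∀ i : Fin 2, IsOddIndepSet G (Finset.univ.filter fun u => c u = i) := by
    intro i
    constructor
    · intro u hu v hv hadj
      simp only [Finset.mem_filter, Finset.mem_univ, true_and] at hu hv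
      exact c.valid hadj (hu.trans hv.symm)
    · intro v hv
      simp only [Finset.mem_filter, Finset.mem_univ, true_and] at hv
      right
      have : ((Finset.univ.filter fun u => c u = i).filter fun u => G.Adj v u)
          = G.neighborFinset v := by
        ext u
        simp only [Finset.mem_filter, Finset.mem_univ, true_and,
          SimpleGraph.mem_neighborFinset]
        constructor
        · rintro ⟨_, h⟩; exact h
        · intro h
          refine ⟨fin2_aux (c v) i (c u) hv ?_, h⟩
          exact fun hc => c.valid h hc.symm
      rw [this, SimpleGraph.card_neighborFinset_eq_degree]
      exact hdeg v
  constructor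
  · -- strongOddChromNum = 2
    have hmem : 2 ∈ {n | ∃ c : V → Fin n, IsStrongOddColoring G c} := ⟨c, hsoc⟩
    apply le_antisymm
    · exact Nat.sInf_le hmem
    · refine le_csInf ⟨2, hmem⟩ ?_
      rintro n ⟨d, hd⟩
      obtain ⟨u, hu⟩ := hedge (Classical.arbitrary V)
      have hne' : d (Classical.arbitrary V) ≠ d u := hd.1 _ _ hu
      have h1 := (d (Classical.arbitrary V)).2
      have h2 := (d u).2
      have h3 : (d (Classical.arbitrary V)).val ≠ (d u).val :=
        fun he => hne' (Fin.ext he)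
      omega
  · -- 2 * oddIndepNum ≥ card V
    have hbdd : BddAbove {k | ∃ S : Finset V, IsOddIndepSet G S ∧ S.card = k} := by
      refine ⟨Fintype.card V, ?_⟩
      rintro k ⟨S, _, rfl⟩
      exact Finset.card_le_univ S
    have hle : ∀ i : Fin 2, (Finset.univ.filter fun u => c u = i).card ≤ oddIndepNum G := by
      intro i
      exact le_csSup hbdd ⟨_, hclass i, rfl⟩
    have hsum : (Finset.univ.filter fun u => c u = 0).card
        + (Finset.univ.filter fun u => c u = 1).card = Fintype.card V := by
      have hcomp := Finset.card_filter_add_card_filter_not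
        (s := (Finset.univ : Finset V)) (p := fun u => c u = (0 : Fin 2))
      have heq : (Finset.univ.filter fun u => ¬ c u = (0 : Fin 2))
          = (Finset.univ.filter fun u => c u = (1 : Fin 2)) := by
        apply Finset.filter_congr
        intro u _
        constructor
        · intro h; exact fin2_aux 0 1 (c u) (by decide) h
        · intro h h0; rw [h0] at h; exact absurd h (by decide)
      rw [heq] at hcomp
      rw [hcomp, Finset.card_univ]
    have := hle 0
    have := hle 1
    omega
end

section
/- If d is an even positive integer and G is a finite d-regular simple graph on n vertices, then (2d−1)·αod(G) ≤ (d−1)·n. -/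
open Finset

section Aux
open Finset
variable {V : Type*} [Fintype V] [DecidableEq V]

lemma key_count_aux (G : SimpleGraph V) [DecidableRel G.Adj]
    (d : ℕ) (hreg : G.IsRegularOfDegree d)
    (S : Finset V) (hind : ∀ u ∈ S, ∀ v ∈ S, ¬ G.Adj u v) :
    ∑ v ∈ Sᶜ, (S.filter fun u => G.Adj v u).card = d * S.card := by
  have h1 : ∑ v ∈ Sᶜ, (S.filter fun u => G.Adj v u).card
      = ∑ v ∈ Sᶜ, ∑ u ∈ S, (if G.Adj v u then 1 else 0) := by
    simp only [Finset.card_filter]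
  rw [h1, Finset.sum_comm]
  have h2 : ∀ u ∈ S, ∑ v ∈ Sᶜ, (if G.Adj v u then 1 else 0) = d := by
    intro u hu
    have : ∑ v ∈ Sᶜ, (if G.Adj v u then 1 else 0) = (Sᶜ.filter fun v => G.Adj v u).card := by
      simp only [Finset.card_filter]
    rw [this]
    have : Sᶜ.filter (fun v => G.Adj v u) = G.neighborFinset u := by
      ext v
      simp only [Finset.mem_filter, Finset.mem_compl, SimpleGraph.mem_neighborFinset]
      constructor
      · rintro ⟨_, h⟩; exact h.symm
      · intro h; exact ⟨fun hv => hind u hu v hv h, h.symm⟩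
    rw [this, G.card_neighborFinset_eq_degree]
    exact hreg u
  rw [Finset.sum_congr rfl h2, Finset.sum_const, smul_eq_mul, mul_comm]

lemma key_bound_aux (G : SimpleGraph V) [DecidableRel G.Adj]
    (d : ℕ) (hd : Even d) (hd0 : 0 < d) (hreg : G.IsRegularOfDegree d)
    (S : Finset V) (hS : IsOddIndepSet G S) :
    (2 * d - 1) * S.card ≤ (d - 1) * Fintype.card V := by
  obtain ⟨hind, hodd⟩ := hS
  have hterm : ∀ v ∈ Sᶜ, (S.filter fun u => G.Adj v u).card ≤ d - 1 := by
    intro v hv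
    rcases hodd v (Finset.mem_compl.mp hv) with h | h
    · simp [h]
    · have hsub : (S.filter fun u => G.Adj v u) ⊆ G.neighborFinset v := by
        intro u hu
        simp only [Finset.mem_filter] at hu
        exact (SimpleGraph.mem_neighborFinset G v u).mpr hu.2
      have hle : (S.filter fun u => G.Adj v u).card ≤ d := by
        calc (S.filter fun u => G.Adj v u).card ≤ (G.neighborFinset v).card :=
              Finset.card_le_card hsub
          _ = d := by rw [G.card_neighborFinset_eq_degree]; exact hreg v
      have hne : (S.filter fun u => G.Adj v u).card ≠ d := by
        intro heq
        rw [heq] at h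
        exact (Nat.not_even_iff_odd.mpr h) hd
      omega
  have hsum : ∑ v ∈ Sᶜ, (S.filter fun u => G.Adj v u).card
      ≤ (d - 1) * Sᶜ.card := by
    calc ∑ v ∈ Sᶜ, (S.filter fun u => G.Adj v u).card
        ≤ ∑ _v ∈ Sᶜ, (d - 1) := Finset.sum_le_sum hterm
      _ = (d - 1) * Sᶜ.card := by rw [Finset.sum_const, smul_eq_mul, mul_comm]
  rw [key_count_aux G d hreg S hind] at hsum
  have hcompl : Sᶜ.card = Fintype.card V - S.card := Finset.card_compl S
  have hSle : S.card ≤ Fintype.card V := Finset.card_le_univ S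
  rw [hcompl] at hsum
  have h1 : (d - 1) * (Fintype.card V - S.card) + (d - 1) * S.card
      = (d - 1) * Fintype.card V := by
    rw [← Nat.mul_add, Nat.sub_add_cancel hSle]
  have h2 : (2 * d - 1) * S.card = d * S.card + (d - 1) * S.card := by
    have : 2 * d - 1 = d + (d - 1) := by omega
    rw [this, Nat.add_mul]
  omega

end Aux

/-- If `d` is an even positive integer and `G` is a finite `d`-regular simple
graph on `n` vertices, then `(2d−1)·αod(G) ≤ (d−1)·n`. -/
theorem oddIndepNum_le_of_even_regular
    {V : Type*} [Fintype V] [DecidableEq V]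
    (G : SimpleGraph V) [DecidableRel G.Adj] (d : ℕ) (hd : Even d) (hd0 : 0 < d)
    (hreg : G.IsRegularOfDegree d) :
    (2 * d - 1) * oddIndepNum G ≤ (d - 1) * Fintype.card V := by
  have hne : Set.Nonempty {k | ∃ S : Finset V, IsOddIndepSet G S ∧ S.card = k} := by
    refine ⟨0, ∅, ⟨?_, ?_⟩, rfl⟩
    · intro u hu; simp at hu
    · intro v _; left; simp
  have hub : ∀ k ∈ {k | ∃ S : Finset V, IsOddIndepSet G S ∧ S.card = k},
      (2 * d - 1) * k ≤ (d - 1) * Fintype.card V := by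
    rintro k ⟨S, hS, rfl⟩
    exact key_bound_aux G d hd hd0 hreg S hS
  have : oddIndepNum G ∈ {k | ∃ S : Finset V, IsOddIndepSet G S ∧ S.card = k} := by
    apply Nat.sSup_mem hne
    exact ⟨Fintype.card V, fun k ⟨S, _, hk⟩ => hk ▸ Finset.card_le_univ S⟩
  exact hub _ this
end

section
/- If G is a finite claw-free simple graph (G contains no induced K_{1,3}), then αod(G) = α(G²) and χso(G) = χ(G²). -/
open Finset

/-- A graph is claw-free if it has no induced `K_{1,3}`: no vertex has three pairwise distinct,
pairwise nonadjacent neighbors. -/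
def ClawFree {V : Type*} (G : SimpleGraph V) : Prop :=
  ∀ v x y z : V, G.Adj v x → G.Adj v y → G.Adj v z → x ≠ y → x ≠ z → y ≠ z →
    (G.Adj x y ∨ G.Adj x z ∨ G.Adj y z)

section Aux

variable {V : Type*} [Fintype V] [DecidableEq V]

lemma third_elem {F : Finset V} {u v : V}
    (hu : u ∈ F) (hv : v ∈ F) (huv : u ≠ v) (hodd : Odd F.card) :
    ∃ x ∈ F, x ≠ u ∧ x ≠ v := by
  have h2 : ({u, v} : Finset V) ⊆ F := by
    intro x hx; simp at hx; rcases hx with rfl | rfl <;> assumption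
  have hc2 : ({u, v} : Finset V).card = 2 := by
    rw [Finset.card_insert_of_notMem (by simp [huv]), Finset.card_singleton]
  have hge : 2 ≤ F.card := hc2 ▸ Finset.card_le_card h2
  obtain ⟨m, hm⟩ := hodd
  have hpos : 0 < (F \ {u, v}).card := by
    rw [Finset.card_sdiff_of_subset h2, hc2]; omega
  obtain ⟨x, hx⟩ := Finset.card_pos.mp hpos
  rw [Finset.mem_sdiff, Finset.mem_insert, Finset.mem_singleton] at hx
  exact ⟨x, hx.1, fun h => hx.2 (Or.inl h), fun h => hx.2 (Or.inr h)⟩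

lemma oddIndep_iff_sqIndep (G : SimpleGraph V) [DecidableRel G.Adj] (hcf : ClawFree G)
    (S : Finset V) :
    IsOddIndepSet G S ↔ (∀ u ∈ S, ∀ v ∈ S, ¬ (graphSquare G).Adj u v) := by
  constructor
  · rintro ⟨hind, hodd⟩ u hu v hv ⟨hne, hadj | ⟨w, hw1, hw2⟩⟩
    · exact hind u hu v hv hadj
    · have hwS : w ∉ S := fun hwS => hind u hu w hwS hw1
      have huF : u ∈ S.filter fun x => G.Adj w x := by
        simp [Finset.mem_filter, hu, hw1.symm]
      have hvF : v ∈ S.filter fun x => G.Adj w x := by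
        simp [Finset.mem_filter, hv, hw2]
      rcases hodd w hwS with he | ho
      · rw [he] at huF; simp at huF
      · obtain ⟨x, hxF, hxu, hxv⟩ := third_elem huF hvF hne ho
        rw [Finset.mem_filter] at hxF
        rcases hcf w u v x hw1.symm hw2 hxF.2 hne hxu.symm hxv.symm with h | h | h
        · exact hind u hu v hv h
        · exact hind u hu x hxF.1 h
        · exact hind v hv x hxF.1 h
  · intro hsq
    constructor
    · intro u hu v hv hadj
      exact hsq u hu v hv ⟨hadj.ne, Or.inl hadj⟩
    · intro v hv
      by_cases he : (S.filter fun u => G.Adj v u) = ∅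
      · exact Or.inl he
      · right
        have hone : (S.filter fun u => G.Adj v u).card = 1 := by
          obtain ⟨u, hu⟩ := Finset.nonempty_iff_ne_empty.mpr he
          rw [Finset.card_eq_one]
          refine ⟨u, Finset.eq_singleton_iff_unique_mem.mpr ⟨hu, fun x hx => ?_⟩⟩
          rw [Finset.mem_filter] at hu hx
          by_contra hxu
          exact hsq x hx.1 u hu.1 ⟨hxu, Or.inr ⟨v, hx.2.symm, hu.2⟩⟩
        rw [hone]; exact odd_one

lemma strongOdd_iff_sqProper (G : SimpleGraph V) [DecidableRel G.Adj] (hcf : ClawFree G)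
    {n : ℕ} (c : V → Fin n) :
    IsStrongOddColoring G c ↔ (∀ u v, (graphSquare G).Adj u v → c u ≠ c v) := by
  constructor
  · rintro ⟨hprop, hodd⟩ u v ⟨hne, hadj | ⟨w, hw1, hw2⟩⟩ hc
    · exact hprop u v hadj hc
    · set F := Finset.univ.filter fun x => G.Adj w x ∧ c x = c v with hF
      have huF : u ∈ F := by simp [hF, hw1.symm, hc]
      have hvF : v ∈ F := by simp [hF, hw2]
      rcases hodd w (c v) with he | ho
      · rw [← hF] at he; rw [he] at huF; simp at huF
      · rw [← hF] at ho
        obtain ⟨x, hxF, hxu, hxv⟩ := third_elem huF hvF hne ho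
        simp only [hF, Finset.mem_filter] at hxF
        rcases hcf w u v x hw1.symm hw2 hxF.2.1 hne hxu.symm hxv.symm with h | h | h
        · exact hprop u v h hc
        · exact hprop u x h (hc.trans hxF.2.2.symm)
        · exact hprop v x h hxF.2.2.symm
  · intro hsq
    refine ⟨fun u v hadj => hsq u v ⟨hadj.ne, Or.inl hadj⟩, fun v k => ?_⟩
    by_cases he : (Finset.univ.filter fun u => G.Adj v u ∧ c u = k) = ∅
    · exact Or.inl he
    · right
      have hone : (Finset.univ.filter fun u => G.Adj v u ∧ c u = k).card = 1 := by
        obtain ⟨u, hu⟩ := Finset.nonempty_iff_ne_empty.mpr he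
        rw [Finset.card_eq_one]
        refine ⟨u, Finset.eq_singleton_iff_unique_mem.mpr ⟨hu, fun x hx => ?_⟩⟩
        simp only [Finset.mem_filter] at hu hx
        by_contra hxu
        exact hsq x u ⟨hxu, Or.inr ⟨v, hx.2.1.symm, hu.2.1⟩⟩ (hx.2.2.trans hu.2.2.symm)
      rw [hone]; exact odd_one

end Aux

/-- If `G` is a finite claw-free simple graph, then `αod(G) = α(G²)` and
`χso(G) = χ(G²)`. -/
theorem oddIndepNum_eq_indepNum_graphSquare_of_clawFree
    {V : Type*} [Fintype V] [DecidableEq V]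
    (G : SimpleGraph V) [DecidableRel G.Adj] (hcf : ClawFree G) :
    oddIndepNum G = indepNum (graphSquare G) ∧
    strongOddChromNum G = chromNum (graphSquare G) := by
  constructor
  · unfold oddIndepNum indepNum
    congr 1
    ext k
    simp only [Set.mem_setOf_eq]
    constructor
    · rintro ⟨S, hS, rfl⟩
      exact ⟨S, (oddIndep_iff_sqIndep G hcf S).mp hS, rfl⟩
    · rintro ⟨S, hS, rfl⟩
      exact ⟨S, (oddIndep_iff_sqIndep G hcf S).mpr hS, rfl⟩
  · unfold strongOddChromNum chromNum
    congr 1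
    ext n
    simp only [Set.mem_setOf_eq]
    constructor
    · rintro ⟨c, hc⟩
      exact ⟨c, (strongOdd_iff_sqProper G hcf c).mp hc⟩
    · rintro ⟨c, hc⟩
      exact ⟨c, (strongOdd_iff_sqProper G hcf c).mpr hc⟩
end

section
/- For every n ≥ 1, the odd independence number of the path on n vertices is ⌈n/3⌉: αod(P_n) = ⌈n/3⌉. -/
open Finset

/-- The path graph on `n` vertices `0, 1, …, n−1`, where `i` is adjacent to `i+1`. -/
def pathG (n : ℕ) : SimpleGraph (Fin n) :=
  SimpleGraph.fromRel (fun i j => (i : ℕ) + 1 = (j : ℕ))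

instance (n : ℕ) : DecidableRel (pathG n).Adj :=
  fun a b => inferInstanceAs
    (Decidable (a ≠ b ∧ ((a : ℕ) + 1 = (b : ℕ) ∨ (b : ℕ) + 1 = (a : ℕ))))

lemma path_adj (n : ℕ) (a b : Fin n) :
    (pathG n).Adj a b ↔ a ≠ b ∧ ((a : ℕ) + 1 = b ∨ (b : ℕ) + 1 = a) := by
  simp [pathG, SimpleGraph.fromRel_adj]

lemma count_mult3 (n : ℕ) : ((range n).filter fun i => i % 3 = 0).card = (n + 2) / 3 := by
  induction n with
  | zero => simp
  | succ n ih =>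
    rw [Finset.range_add_one, Finset.filter_insert]
    by_cases h : n % 3 = 0
    · rw [if_pos h, Finset.card_insert_of_notMem (by simp), ih]; omega
    · rw [if_neg h, ih]; omega

/-- For every `n ≥ 1`, `αod(P_n) = ⌈n/3⌉`. -/
theorem oddIndepNum_pathGraph (n : ℕ) (hn : 1 ≤ n) :
    (oddIndepNum (pathG n) : ℤ) = ⌈(n : ℚ) / 3⌉ := by
  set m : ℕ := (n + 2) / 3 with hm
  set S₀ : Finset (Fin n) := univ.filter (fun i => (i : ℕ) % 3 = 0) with hS₀
  have memS₀ : ∀ i : Fin n, i ∈ S₀ ↔ (i : ℕ) % 3 = 0 := by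
    intro i; simp [hS₀]
  have hwit : IsOddIndepSet (pathG n) S₀ := by
    constructor
    · intro u hu v hv hadj
      rw [memS₀] at hu hv
      rw [path_adj] at hadj
      omega
    · intro v hv
      rw [memS₀] at hv
      by_cases h1 : (v : ℕ) % 3 = 1
      · right
        have ha : (v : ℕ) - 1 < n := by omega
        have : S₀.filter (fun u => (pathG n).Adj v u) = {⟨(v : ℕ) - 1, ha⟩} := by
          ext u
          simp only [Finset.mem_filter, Finset.mem_singleton, memS₀, path_adj]
          constructor
          · rintro ⟨hu3, -, hadj⟩
            apply Fin.ext
            simp only []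
            omega
          · rintro rfl
            refine ⟨by simp; omega, ?_, ?_⟩
            · intro he
              apply_fun Fin.val at he
              simp at he
              omega
            · simp
              omega
        rw [this]; simp
      · have h2 : (v : ℕ) % 3 = 2 := by omega
        by_cases hlt : (v : ℕ) + 1 < n
        · right
          have : S₀.filter (fun u => (pathG n).Adj v u) = {⟨(v : ℕ) + 1, hlt⟩} := by
            ext u
            simp only [Finset.mem_filter, Finset.mem_singleton, memS₀, path_adj]
            constructor
            · rintro ⟨hu3, -, hadj⟩
              apply Fin.ext
              simp only []
              omega
            · rintro rfl
              refine ⟨by simp; omega, ?_, ?_⟩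
              · intro he
                apply_fun Fin.val at he
                simp at he
              · simp
          rw [this]; simp
        · left
          rw [Finset.filter_eq_empty_iff]
          intro u hu
          rw [memS₀] at hu
          rw [path_adj]
          have := u.isLt
          rintro ⟨-, h | h⟩ <;> omega
  have hcard : S₀.card = m := by
    rw [hm, ← count_mult3 n]
    apply Finset.card_bij (fun (a : Fin n) _ => (a : ℕ))
    · intro a ha
      simp only [Finset.mem_filter, Finset.mem_range]
      exact ⟨a.isLt, (memS₀ a).mp ha⟩
    · intro a _ b _ h
      exact Fin.ext h
    · intro b hb
      simp only [Finset.mem_filter, Finset.mem_range] at hb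
      exact ⟨⟨b, hb.1⟩, (memS₀ _).mpr hb.2, rfl⟩
  have hub : ∀ S : Finset (Fin n), IsOddIndepSet (pathG n) S → S.card ≤ m := by
    intro S hS
    have key : ∀ i ∈ S, ∀ j ∈ S, (i : ℕ) < (j : ℕ) → (i : ℕ) + 3 ≤ (j : ℕ) := by
      intro i hi j hj hij
      by_contra hc
      push_neg at hc
      rcases Nat.lt_or_ge ((i : ℕ) + 1) (j : ℕ) with h' | h'
      · -- j = i + 2, middle vertex
        have hj2 : (j : ℕ) = (i : ℕ) + 2 := by omega
        have hwlt : (i : ℕ) + 1 < n := by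
          have := j.isLt
          omega
        set w : Fin n := ⟨(i : ℕ) + 1, hwlt⟩ with hw
        have hadjwi : (pathG n).Adj w i := by
          rw [path_adj]
          refine ⟨?_, Or.inr (by simp [hw])⟩
          intro he
          apply_fun Fin.val at he
          simp [hw] at he
        have hadjwj : (pathG n).Adj w j := by
          rw [path_adj]
          refine ⟨?_, Or.inl (by simp [hw]; omega)⟩
          intro he
          apply_fun Fin.val at he
          simp [hw] at he
          omega
        have hwS : w ∉ S := fun hwS => hS.1 w hwS i hi hadjwi
        have hij' : i ≠ j := by
          intro he
          rw [he] at hij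
          omega
        have hfil : S.filter (fun u => (pathG n).Adj w u) = {i, j} := by
          ext u
          simp only [Finset.mem_filter, Finset.mem_insert, Finset.mem_singleton]
          constructor
          · rintro ⟨huS, hadj⟩
            rw [path_adj] at hadj
            simp only [hw] at hadj
            rcases hadj.2 with h | h
            · right; apply Fin.ext; omega
            · left; apply Fin.ext; omega
          · rintro (rfl | rfl)
            · exact ⟨hi, hadjwi⟩
            · exact ⟨hj, hadjwj⟩
        rcases hS.2 w hwS with he | ho
        · rw [hfil] at he
          simp at he
        · rw [hfil, Finset.card_insert_of_notMem (by simpa using hij'),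
            Finset.card_singleton] at ho
          exact (by decide : ¬ Odd 2) ho
      · have hji : (j : ℕ) = (i : ℕ) + 1 := by omega
        have hne : i ≠ j := by
          intro he
          rw [he] at hij
          omega
        exact hS.1 i hi j hj (by rw [path_adj]; exact ⟨hne, Or.inl hji.symm⟩)
    have hinj : Set.InjOn (fun i : Fin n => (i : ℕ) / 3) S := by
      intro i hi j hj hij
      simp only at hij
      by_contra hne
      rcases lt_trichotomy (i : ℕ) (j : ℕ) with h | h | h
      · have := key i (by simpa using hi) j (by simpa using hj) h
        omega
      · exact hne (Fin.ext h)
      · have := key j (by simpa using hj) i (by simpa using hi) h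
        omega
    calc S.card = (S.image (fun i : Fin n => (i : ℕ) / 3)).card :=
          (Finset.card_image_of_injOn hinj).symm
      _ ≤ (Finset.range m).card := by
          apply Finset.card_le_card
          intro b hb
          simp only [Finset.mem_image] at hb
          obtain ⟨a, _, rfl⟩ := hb
          simp only [Finset.mem_range]
          have := a.isLt
          omega
      _ = m := Finset.card_range m
  have hnum : oddIndepNum (pathG n) = m := by
    apply le_antisymm
    · have h0 : (0 : ℕ) ∈ {k | ∃ S : Finset (Fin n), IsOddIndepSet (pathG n) S ∧ S.card = k} :=
        ⟨∅, ⟨by simp, by simp⟩, by simp⟩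
      apply csSup_le ⟨0, h0⟩
      rintro k ⟨S, hS, rfl⟩
      exact hub S hS
    · apply le_csSup
      · exact ⟨m, by rintro k ⟨S, hS, rfl⟩; exact hub S hS⟩
      · exact ⟨S₀, hwit, hcard⟩
  rw [hnum]
  have hA : n ≤ 3 * m := by omega
  have hB : 3 * m ≤ n + 2 := by omega
  have hA' : (n : ℚ) ≤ 3 * m := by exact_mod_cast hA
  have hB' : (3 * m : ℚ) ≤ n + 2 := by exact_mod_cast hB
  symm
  rw [Int.ceil_eq_iff]
  push_cast
  constructor
  · rw [lt_div_iff₀ (by norm_num : (0:ℚ) < 3)]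
    linarith
  · rw [div_le_iff₀ (by norm_num : (0:ℚ) < 3)]
    linarith
end
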